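/- For every y ∈ [0,1], the limit as θ* → 0⁺ of F_{θ*}(y) = (y + sin(2θ*(1−y))/(2θ*) − sin(2θ*)/(2θ*)) / (1 − sin(2θ*)/(2θ*)) equals y³ − 3y² + 3y. -/

import Mathlib

open Real Filter

noncomputable def Fcum (t y : ℝ) : ℝ :=
  (y + Real.sin (2 * t * (1 - y)) / (2 * t) - Real.sin (2 * t) / (2 * t)) /
    (1 - Real.sin (2 * t) / (2 * t))

lemma phi_lim : Tendsto (fun x : ℝ => (x - Real.sin x) / x ^ 3)
    (nhdsWithin 0 (Set.Ioi 0)) (nhds (1/6)) := by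
  rw [← tendsto_sub_nhds_zero_iff]
  apply squeeze_zero_norm' (a := fun x => x * (5/96))
  · filter_upwards [Ioo_mem_nhdsGT_of_mem (Set.mem_Ico.mpr ⟨le_refl (0:ℝ), one_pos⟩)] with x hx
    obtain ⟨hx0, hx1⟩ := hx
    have hxa : |x| ≤ 1 := by rw [abs_of_pos hx0]; linarith
    have hb := Real.sin_bound hxa
    have hx3 : x ^ 3 > 0 := by positivity
    have : (x - Real.sin x) / x ^ 3 - 1/6 = -((Real.sin x - (x - x ^ 3 / 6)) / x ^ 3) := by
      field_simp; ring
    rw [Real.norm_eq_abs, this, abs_neg, abs_div, abs_of_pos hx3, div_le_iff₀ hx3]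
    calc |Real.sin x - (x - x ^ 3 / 6)| ≤ |x| ^ 4 * (5/96) := hb.trans (by
          have h4 : 0 ≤ |x| ^ 4 := by positivity
          have h5 : |x| ^ 5 = |x| ^ 4 * |x| := by ring
          rw [h5]; nlinarith [abs_nonneg x])
      _ = x * (5/96) * x ^ 3 := by rw [abs_of_pos hx0]; ring
  · have : Tendsto (fun x : ℝ => x * (5/96)) (nhds 0) (nhds (0 * (5/96))) :=
      (tendsto_id.mul tendsto_const_nhds)
    simpa using this.mono_left nhdsWithin_le_nhds

theorem stmt2 (y : ℝ) (hy : y ∈ Set.Icc (0:ℝ) 1) :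
    Tendsto (fun t => Fcum t y) (nhdsWithin 0 (Set.Ioi 0))
      (nhds (y ^ 3 - 3 * y ^ 2 + 3 * y)) := by
  obtain ⟨hy0, hy1⟩ := hy
  rcases eq_or_lt_of_le hy1 with h1 | h1
  · -- y = 1
    subst h1
    have : Tendsto (fun _ : ℝ => (1:ℝ)) (nhdsWithin 0 (Set.Ioi 0)) (nhds 1) :=
      tendsto_const_nhds
    have heq : ∀ᶠ t in nhdsWithin (0:ℝ) (Set.Ioi 0), (1:ℝ) = Fcum t 1 := by
      filter_upwards [self_mem_nhdsWithin] with t ht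
      have ht0 : (0:ℝ) < t := ht
      have hs := Real.sin_lt (by linarith : (0:ℝ) < 2 * t)
      have hden : 1 - Real.sin (2 * t) / (2 * t) ≠ 0 := by
        have : Real.sin (2 * t) / (2 * t) < 1 := by
          rw [div_lt_one (by linarith)]; exact hs
        linarith
      simp only [Fcum, sub_self, mul_zero, Real.sin_zero, zero_div]
      rw [add_zero, eq_comm, div_eq_one_iff_eq hden]
    have := this.congr' heq
    convert this using 2
    norm_num
  · -- y < 1
    have hmap : ∀ c : ℝ, 0 < c → Tendsto (fun t : ℝ => 2 * t * c)
        (nhdsWithin 0 (Set.Ioi 0)) (nhdsWithin 0 (Set.Ioi 0)) := by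
      intro c hc
      apply tendsto_nhdsWithin_of_tendsto_nhds_of_eventually_within
      · have : Tendsto (fun t : ℝ => 2 * t * c) (nhds 0) (nhds (2 * 0 * c)) :=
          ((tendsto_id.const_mul 2).mul_const c)
        simpa using this.mono_left nhdsWithin_le_nhds
      · filter_upwards [self_mem_nhdsWithin] with t ht
        exact mul_pos (mul_pos two_pos ht) hc
    have h2 : Tendsto (fun t : ℝ => 2 * t) (nhdsWithin (0:ℝ) (Set.Ioi 0))
        (nhdsWithin 0 (Set.Ioi 0)) := by
      have := hmap 1 one_pos
      simpa using this
    have hB := phi_lim.comp h2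
    have hA := phi_lim.comp (hmap (1 - y) (by linarith))
    have key := (hB.sub (hA.const_mul ((1-y)^3))).div hB (by norm_num : (1/6:ℝ) ≠ 0)
    have hval : ((1:ℝ)/6 - (1-y)^3 * (1/6)) / (1/6) = y ^ 3 - 3 * y ^ 2 + 3 * y := by ring
    rw [hval] at key
    apply key.congr'
    filter_upwards [self_mem_nhdsWithin] with t ht
    have ht0 : (0:ℝ) < t := ht
    have hs := Real.sin_lt (by linarith : (0:ℝ) < 2 * t)
    have h2t : (2 * t : ℝ) ≠ 0 := by positivity
    have hy' : (0:ℝ) < 1 - y := by linarith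
    have ha : (2 * t * (1 - y) : ℝ) ≠ 0 := by positivity
    have hd : (2 * t - Real.sin (2 * t) : ℝ) ≠ 0 := by linarith
    have hden : 1 - Real.sin (2 * t) / (2 * t) ≠ 0 := by
      have : Real.sin (2 * t) / (2 * t) < 1 := by
        rw [div_lt_one (by linarith)]; exact hs
      linarith
    have hphib : (2 * t - Real.sin (2 * t)) / (2 * t) ^ 3 ≠ 0 :=
      div_ne_zero hd (by positivity)
    show ((2*t - Real.sin (2*t))/(2*t)^3 - (1-y)^3 * ((2*t*(1-y) - Real.sin (2*t*(1-y)))/(2*t*(1-y))^3)) / ((2*t - Real.sin (2*t))/(2*t)^3) = Fcum t y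
    unfold Fcum
    field_simp
    ring
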